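/- arXiv:2205.00527 — 2 statements merged into one kernel-verified Lean document; each statement's English description precedes it below -/
import Mathlib

section
/- For all nonnegative integers n and j, the number of partitions π into distinct parts with E(π) = n and γ(π) = j equals the number of partitions of n into parts each at most j. (The left-hand set is finite: for such π the largest part satisfies λ1 ≤ j + n.) -/
/-- Sum of `f` over the entries of a list at even 0-based positions, i.e. over the
odd-indexed parts `λ1, λ3, λ5, …` of a partition `(λ1, λ2, λ3, …)`. -/
def sumAlt (f : ℕ → ℕ) : List ℕ → ℕ
  | [] => 0
  | [a] => f a
  | a :: _ :: l => f a + sumAlt f l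

/-- `O(π) = λ1 + λ3 + λ5 + ⋯`, the sum of the odd-indexed parts. -/
def Osum (l : List ℕ) : ℕ := sumAlt id l

/-- `E(π) = λ2 + λ4 + λ6 + ⋯`, the sum of the even-indexed parts. -/
def Esum (l : List ℕ) : ℕ := sumAlt id l.tail

/-- `γ(π) = λ1 − λ2 + λ3 − λ4 + ⋯ = O(π) − E(π)`, the alternating sum of the parts.
For a weakly decreasing list we have `Osum l ≥ Esum l`, so natural subtraction is exact. -/
def gammaSum (l : List ℕ) : ℕ := Osum l - Esum l

/-- `⌈O⌉(π) = ∑ ⌈λ_{2i−1}/2⌉`. -/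
def ceilO (l : List ℕ) : ℕ := sumAlt (fun a => (a + 1) / 2) l

/-- `⌊O⌋(π) = ∑ ⌊λ_{2i−1}/2⌋`. -/
def floorO (l : List ℕ) : ℕ := sumAlt (fun a => a / 2) l

/-- `⌈E⌉(π) = ∑ ⌈λ_{2i}/2⌉`. -/
def ceilE (l : List ℕ) : ℕ := sumAlt (fun a => (a + 1) / 2) l.tail

/-- `⌊E⌋(π) = ∑ ⌊λ_{2i}/2⌋`. -/
def floorE (l : List ℕ) : ℕ := sumAlt (fun a => a / 2) l.tail

/-- A partition: a weakly decreasing finite list of positive integers. -/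
def IsPartition (l : List ℕ) : Prop := l.Pairwise (· ≥ ·) ∧ ∀ x ∈ l, 0 < x

/-- A partition into distinct parts: a strictly decreasing finite list of positive integers. -/
def IsDistinctPartition (l : List ℕ) : Prop := l.Pairwise (· > ·) ∧ ∀ x ∈ l, 0 < x

/-- The Gaussian binomial coefficient `[n choose k]_q` as a polynomial in `q`
(defined by the q-Pascal recurrence; it equals `(q;q)_n / ((q;q)_k (q;q)_{n−k})`). -/
noncomputable def qbinom : ℕ → ℕ → Polynomial ℤ
  | _, 0 => 1
  | 0, _ + 1 => 0
  | n + 1, k + 1 => qbinom n k + Polynomial.X ^ (k + 1) * qbinom n (k + 1)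

-- basic sum lemmas
lemma esum_cons (a : ℕ) (l : List ℕ) : Esum (a :: l) = Osum l := rfl

lemma osum_cons (a : ℕ) (l : List ℕ) : Osum (a :: l) = a + Esum l := by
  cases l <;> simp [Osum, Esum, sumAlt]

lemma esum_le_osum : ∀ (l : List ℕ), l.Pairwise (· ≥ ·) → Esum l ≤ Osum l
  | [] => by simp [Esum, Osum, sumAlt]
  | [a] => by simp [Esum, Osum, sumAlt]
  | a :: b :: l => by
    intro h
    rw [List.pairwise_cons] at h
    have hab : a ≥ b := h.1 b (by simp)
    have ih := esum_le_osum l (by rw [List.pairwise_cons] at h; exact h.2.2)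
    rw [esum_cons, osum_cons, osum_cons, esum_cons]
    omega

lemma gamma_nil : gammaSum [] = 0 := rfl

lemma gamma_single (a : ℕ) : gammaSum [a] = a := by
  simp [gammaSum, Osum, Esum, sumAlt]

lemma gamma_cons_cons (a b : ℕ) (l : List ℕ) (h : List.Pairwise (· ≥ ·) (a :: b :: l)) :
    gammaSum (a :: b :: l) = (a - b) + gammaSum l := by
  rw [List.pairwise_cons] at h
  have hab : a ≥ b := h.1 b (by simp)
  have h2 := h.2
  rw [List.pairwise_cons] at h2
  have hle := esum_le_osum l h2.2
  simp only [gammaSum, osum_cons, esum_cons]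
  omega


/-- Forward bijection: strict partition ↦ partition with parts ≤ γ summing to E. -/
def phi : List ℕ → List ℕ
  | [] => []
  | [_] => []
  | _ :: b :: rest =>
      (1 + gammaSum rest) :: ((phi rest).map (· + 1) ++ List.replicate (b - rest.headD 0 - 1) 1)

def pb : ℕ → Bool := fun x => 2 ≤ x

/-- Inverse bijection. -/
def psi (j : ℕ) : List ℕ → List ℕ
  | [] => if j = 0 then [] else [j]
  | h :: tl =>
      (j + 1 + (((psi (h - 1) ((tl.takeWhile pb).map (· - 1))).headD 0) + 1 +
          (tl.dropWhile pb).length) - h) ::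
      (((psi (h - 1) ((tl.takeWhile pb).map (· - 1))).headD 0) + 1 +
          (tl.dropWhile pb).length) ::
      psi (h - 1) ((tl.takeWhile pb).map (· - 1))
  termination_by l => l.length
  decreasing_by
    simp only [List.length_map, List.length_cons]
    have := (List.takeWhile_sublist (l := tl) pb).length_le
    omega

lemma sum_map_succ (l : List ℕ) : (l.map (· + 1)).sum = l.sum + l.length := by
  induction l with
  | nil => simp
  | cons a l ih => simp [ih]; omega

lemma sorted_replicate (n c : ℕ) : (List.replicate n c).Pairwise (· ≥ ·) := by
  induction n with
  | zero => simp
  | succ n ih =>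
    rw [List.replicate_succ, List.pairwise_cons]
    exact ⟨fun b hb => by simp [List.eq_of_mem_replicate hb], ih⟩

lemma takeWhile_append_all {p : ℕ → Bool} {xs ys : List ℕ} (h : ∀ x ∈ xs, p x = true) :
    (xs ++ ys).takeWhile p = xs ++ ys.takeWhile p := by
  induction xs with
  | nil => simp
  | cons a xs ih =>
    simp only [List.cons_append, List.takeWhile_cons, h a (by simp)]
    simp [ih (fun x hx => h x (by simp [hx]))]

lemma dropWhile_append_all {p : ℕ → Bool} {xs ys : List ℕ} (h : ∀ x ∈ xs, p x = true) :
    (xs ++ ys).dropWhile p = ys.dropWhile p := by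
  induction xs with
  | nil => simp
  | cons a xs ih =>
    simp only [List.cons_append, List.dropWhile_cons, h a (by simp)]
    exact ih (fun x hx => h x (by simp [hx]))

lemma takeWhile_replicate_one (n : ℕ) : (List.replicate n 1).takeWhile pb = [] := by
  cases n <;> simp [List.replicate_succ, List.takeWhile_cons, pb]

lemma dropWhile_replicate_one (n : ℕ) :
    (List.replicate n 1).dropWhile pb = List.replicate n 1 := by
  cases n <;> simp [List.replicate_succ, List.dropWhile_cons, pb]

lemma mem_le_headD {l : List ℕ} (h : l.Pairwise (· ≥ ·)) {x : ℕ} (hx : x ∈ l) :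
    x ≤ l.headD 0 := by
  cases l with
  | nil => simp at hx
  | cons a l =>
    rcases List.mem_cons.1 hx with rfl | hx
    · simp
    · exact (List.pairwise_cons.1 h).1 x hx

lemma dropWhile_ones : ∀ (l : List ℕ), l.Pairwise (· ≥ ·) → (∀ x ∈ l, 1 ≤ x) →
    l.dropWhile pb = List.replicate (l.dropWhile pb).length 1 := by
  intro l
  induction l with
  | nil => simp
  | cons a l ih =>
    intro hs hp
    rw [List.pairwise_cons] at hs
    by_cases ha : pb a
    · rw [List.dropWhile_cons_of_pos ha]
      exact ih hs.2 (fun x hx => hp x (by simp [hx]))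
    · rw [List.dropWhile_cons_of_neg ha]
      have ha1 : a = 1 := by
        have := hp a (by simp)
        simp [pb] at ha
        omega
      rw [List.eq_replicate_iff]
      refine ⟨rfl, fun b hb => ?_⟩
      rcases List.mem_cons.1 hb with rfl | hb
      · exact ha1
      · have := hs.1 b hb
        have := hp b (by simp [hb])
        omega


theorem forward : ∀ (l : List ℕ), IsDistinctPartition l →
    (phi l).Pairwise (· ≥ ·) ∧ (∀ x ∈ phi l, 1 ≤ x ∧ x ≤ gammaSum l) ∧
    (phi l).sum = Esum l ∧ gammaSum l + (phi l).length = l.headD 0 ∧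
    psi (gammaSum l) (phi l) = l
  | [] => by
    intro _
    refine ⟨by simp [phi], by simp [phi], by simp [phi, Esum, sumAlt], by simp [phi, gamma_nil], ?_⟩
    simp [phi, gamma_nil, psi]
  | [a] => by
    intro h
    have ha : 0 < a := h.2 a (by simp)
    refine ⟨by simp [phi], by simp [phi], by simp [phi, Esum, sumAlt], by simp [phi, gamma_single], ?_⟩
    simp [phi, gamma_single, psi]
    omega
  | a :: b :: rest => by
    intro h
    obtain ⟨hfull, hpos⟩ := h
    have hw : (a :: b :: rest).Pairwise (· ≥ ·) := hfull.imp (fun h => le_of_lt h)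
    rw [List.pairwise_cons] at hfull
    have hab : b < a := hfull.1 b (by simp)
    have hsort2 := hfull.2
    rw [List.pairwise_cons] at hsort2
    have hrest : IsDistinctPartition rest := ⟨hsort2.2, fun x hx => hpos x (by simp [hx])⟩
    obtain ⟨ihs, ihb, ihsum, ihinv, ihpsi⟩ := forward rest hrest
    set g := gammaSum rest with hg
    set P := phi rest with hP
    set hr := rest.headD 0 with hhr
    have hbhr : hr < b := by
      cases rest with
      | nil => simpa [hhr] using hpos b (by simp)
      | cons c s => simpa [hhr] using hsort2.1 c (by simp)
    have hgamma : gammaSum (a :: b :: rest) = (a - b) + g := gamma_cons_cons a b rest hw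
    set M := P.map (· + 1) with hM
    set R := List.replicate (b - hr - 1) 1 with hR
    have hphi : phi (a :: b :: rest) = (1 + g) :: (M ++ R) := rfl
    have hmem : ∀ x ∈ M ++ R, 1 ≤ x ∧ x ≤ 1 + g := by
      intro x hx
      rcases List.mem_append.1 hx with hx | hx
      · obtain ⟨y, hy, rfl⟩ := List.mem_map.1 hx
        have := ihb y hy
        omega
      · have := List.eq_of_mem_replicate hx
        omega
    have hM2 : ∀ x ∈ M, pb x = true := by
      intro x hx
      obtain ⟨y, hy, rfl⟩ := List.mem_map.1 hx
      have := ihb y hy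
      simp [pb]
      omega
    have hEsum : Esum (a :: b :: rest) = b + Esum rest := by
      rw [esum_cons, osum_cons]
    refine ⟨?_, ?_, ?_, ?_, ?_⟩
    · rw [hphi, List.pairwise_cons]
      refine ⟨fun x hx => (hmem x hx).2, ?_⟩
      rw [List.pairwise_append]
      refine ⟨List.Pairwise.map _ (fun x y hxy => by omega) ihs, sorted_replicate _ _, ?_⟩
      intro x hx y hy
      have := (hmem x (List.mem_append.2 (Or.inl hx))).1
      have := List.eq_of_mem_replicate hy
      omega
    · rw [hphi, hgamma]
      intro x hx
      rcases List.mem_cons.1 hx with rfl | hx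
      · omega
      · have := hmem x hx
        omega
    · rw [hphi, hEsum, List.sum_cons, List.sum_append, hM, sum_map_succ, hR,
        List.sum_replicate, ← ihsum]
      simp only [smul_eq_mul, mul_one]
      omega
    · rw [hphi, hgamma]
      simp only [List.length_cons, List.length_append, hM, List.length_map, hR,
        List.length_replicate, List.headD_cons]
      omega
    · rw [hphi, hgamma, psi]
      have htw : (M ++ R).takeWhile pb = M := by
        rw [takeWhile_append_all hM2, hR, takeWhile_replicate_one, List.append_nil]
      have hdw : (M ++ R).dropWhile pb = R := by
        rw [dropWhile_append_all hM2, hR, dropWhile_replicate_one]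
      have hmm : M.map (· - 1) = P := by
        rw [hM, List.map_map]
        have hc : ((fun x => x - 1) ∘ fun x : ℕ => x + 1) = id := by
          funext x
          simp
        rw [hc, List.map_id]
      have h1g : 1 + g - 1 = g := by omega
      rw [htw, hdw, hmm, h1g, ihpsi]
      simp only [← hhr, hR, List.length_replicate, List.cons.injEq]
      exact ⟨by omega, by omega, trivial⟩


theorem backward : ∀ (j : ℕ) (v : List ℕ), v.Pairwise (· ≥ ·) → (∀ x ∈ v, 1 ≤ x ∧ x ≤ j) →
    IsDistinctPartition (psi j v) ∧ Esum (psi j v) = v.sum ∧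
    gammaSum (psi j v) = j ∧ phi (psi j v) = v
  | j, [] => by
    intro _ _
    by_cases hj : j = 0
    · subst hj
      rw [psi]
      simp [gamma_nil, phi, Esum, sumAlt, IsDistinctPartition]
    · rw [psi]
      simp only [if_neg hj]
      refine ⟨⟨by simp, by simpa using Nat.pos_of_ne_zero hj⟩, by simp [Esum, sumAlt], ?_, by simp [phi]⟩
      simp [gamma_single]
  | j, h :: tl => by
    intro hsv hb
    obtain ⟨hh1, hhj⟩ := hb h (by simp)
    rw [List.pairwise_cons] at hsv
    set T := tl.takeWhile pb with hT
    set D := tl.dropWhile pb with hD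
    set m := T.map (· - 1) with hm
    have hTD : T ++ D = tl := List.takeWhile_append_dropWhile (p := pb) (l := tl)
    have hTsub : ∀ x ∈ T, 2 ≤ x ∧ x ≤ h := by
      intro x hx
      refine ⟨?_, hsv.1 x ((List.takeWhile_sublist pb).subset hx)⟩
      have := List.mem_takeWhile_imp hx
      simpa [pb] using this
    have hDrep : D = List.replicate D.length 1 :=
      dropWhile_ones tl hsv.2 (fun x hx => (hb x (by simp [hx])).1)
    set e := D.length with he
    have hTsorted : T.Pairwise (· ≥ ·) := List.Pairwise.sublist (List.takeWhile_sublist pb) hsv.2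
    have hmsorted : m.Pairwise (· ≥ ·) :=
      List.Pairwise.map _ (fun x y hxy => by omega) hTsorted
    have hmb : ∀ x ∈ m, 1 ≤ x ∧ x ≤ h - 1 := by
      intro x hx
      obtain ⟨y, hy, rfl⟩ := List.mem_map.1 hx
      have := hTsub y hy
      omega
    obtain ⟨ihdp, ihE, ihγ, ihφ⟩ := backward (h - 1) m hmsorted hmb
    set rest := psi (h - 1) m with hrest
    obtain ⟨-, -, -, finv, -⟩ := forward rest ihdp
    rw [ihγ, ihφ] at finv
    set hr := rest.headD 0 with hhr
    set b := hr + 1 + e with hbdef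
    set A := j + 1 + b - h with hA
    have hpsieq : psi j (h :: tl) = A :: b :: rest := by
      rw [psi]
    have hab : b < A := by omega
    have hrb : hr < b := by omega
    have hrestmem : ∀ x ∈ rest, x ≤ hr := fun x hx =>
      mem_le_headD (ihdp.1.imp (fun h => le_of_lt h)) hx
    have hstrict : IsDistinctPartition (A :: b :: rest) := by
      constructor
      · rw [List.pairwise_cons, List.pairwise_cons]
        refine ⟨?_, fun x hx => by have := hrestmem x hx; omega, ihdp.1⟩
        intro x hx
        rcases List.mem_cons.1 hx with rfl | hx
        · omega
        · have := hrestmem x hx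
          omega
      · intro x hx
        rcases List.mem_cons.1 hx with rfl | hx
        · omega
        rcases List.mem_cons.1 hx with rfl | hx
        · omega
        · exact ihdp.2 x hx
    have hTm : m.map (· + 1) = T := by
      rw [hm, List.map_map]
      have : ∀ x ∈ T, ((fun x => x + 1) ∘ fun x => x - 1) x = id x := by
        intro x hx
        have := hTsub x hx
        simp
        omega
      rw [List.map_congr_left this, List.map_id]
    have hTsum : T.sum = m.sum + m.length := by
      rw [← hTm, sum_map_succ, List.length_map]
    refine ⟨hpsieq ▸ hstrict, ?_, ?_, ?_⟩
    · rw [hpsieq, esum_cons, osum_cons, ihE, List.sum_cons, ← hTD, List.sum_append]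
      have hDsum : D.sum = e := by
        rw [hDrep]
        simp
      rw [hDsum, hTsum]
      omega
    · rw [hpsieq, gamma_cons_cons A b rest (hstrict.1.imp (fun h => le_of_lt h)), ihγ]
      omega
    · rw [hpsieq]
      show (1 + gammaSum rest) :: ((phi rest).map (· + 1) ++ List.replicate (b - rest.headD 0 - 1) 1) = h :: tl
      rw [ihγ, ihφ, hTm, ← hhr]
      have h1 : 1 + (h - 1) = h := by omega
      have h2 : b - hr - 1 = e := by omega
      rw [h1, h2, ← hDrep, hTD]
  termination_by j v => v.length
  decreasing_by
    simp only [hm, hT, List.length_map, List.length_cons]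
    have := (List.takeWhile_sublist (l := tl) pb).length_le
    omega



/-- The number of partitions into distinct parts with `E(π) = n` and `γ(π) = j` equals
the number of partitions of `n` into parts each at most `j`. -/
theorem distinct_evenIndexed_eq_bounded_parts (n j : ℕ) :
    Nat.card {l : List ℕ // IsDistinctPartition l ∧ Esum l = n ∧ gammaSum l = j} =
      Nat.card {l : List ℕ // IsPartition l ∧ l.sum = n ∧ ∀ x ∈ l, x ≤ j} := by
  apply Nat.card_congr
  exact {
    toFun := fun x => ⟨phi x.1, by
      obtain ⟨l, hl, he, hg⟩ := x
      obtain ⟨s, bnd, hsum, -, -⟩ := forward l hl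
      exact ⟨⟨s, fun y hy => (bnd y hy).1⟩, by rw [hsum, he], fun y hy => hg ▸ (bnd y hy).2⟩⟩
    invFun := fun x => ⟨psi j x.1, by
      obtain ⟨l, hl, hs, hb⟩ := x
      obtain ⟨dp, eE, gg, -⟩ := backward j l hl.1 (fun y hy => ⟨hl.2 y hy, hb y hy⟩)
      exact ⟨dp, by rw [eE, hs], gg⟩⟩
    left_inv := fun x => by
      obtain ⟨l, hl, he, hg⟩ := x
      apply Subtype.ext
      show psi j (phi l) = l
      rw [← hg]
      exact (forward l hl).2.2.2.2
    right_inv := fun x => by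
      obtain ⟨l, hl, hs, hb⟩ := x
      apply Subtype.ext
      exact (backward j l hl.1 (fun y hy => ⟨hl.2 y hy, hb y hy⟩)).2.2.2 }
end

section
/- For all nonnegative integers N and n, the number of partitions π into distinct parts with largest part ≤ N and O(π) = n equals the number of partitions of n whose largest hook length is at most N, i.e., partitions μ = (μ1, …, μr) of n with μ1 + r − 1 ≤ N. -/
section SchmidtAux
open List

def attachH (a b : ℕ) (ν : List ℕ) : List ℕ :=
  (a + 1) :: (ν.map (· + 1) ++ List.replicate (b - ν.length) 1)

def peelT (t : List ℕ) : List ℕ := (t.takeWhile (fun z => 2 ≤ z)).map (· - 1)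

lemma peelT_length_le (t : List ℕ) : (peelT t).length ≤ t.length := by
  simpa [peelT] using (t.takeWhile_sublist (fun z => decide (2 ≤ z))).length_le

def gg : List ℕ → ℕ
  | [] => 0
  | [x] => x
  | x :: y :: l => (x - y) + gg l

def cons0 (x : ℕ) (l : List ℕ) : List ℕ := if x = 0 then [] else x :: l

def Phi : List ℕ → List ℕ
  | [] => []
  | [x] => attachH 0 (x - 1) []
  | x :: y :: l => attachH (gg (y :: l)) ((x - y - 1) + gg l) (Phi l)

def Psi : List ℕ → List ℕ
  | [] => []
  | m :: t =>
      (m + t.length) :: cons0 ((m - 1) + (peelT t).length) (Psi (peelT t))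
  termination_by l => l.length
  decreasing_by
    have := peelT_length_le t
    simp only [List.length_cons]; omega

lemma mem_le_headI {l : List ℕ} (h : l.Pairwise (· ≥ ·)) {x : ℕ} (hx : x ∈ l) :
    x ≤ l.headI := by
  cases l with
  | nil => simp at hx
  | cons a t =>
    rcases mem_cons.1 hx with rfl | hx
    · simp
    · exact List.rel_of_pairwise_cons h hx

lemma gg_tail_add {l : List ℕ} (h : l.Pairwise (· ≥ ·)) : gg l.tail + gg l = l.headI := by
  induction l with
  | nil => simp [gg]
  | cons x m ih =>
    cases m with
    | nil => simp [gg]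
    | cons y m' =>
      have h' := ih h.tail
      have hxy : y ≤ x := List.rel_of_pairwise_cons h (mem_cons_self)
      simp only [gg, List.tail_cons, List.headI] at h' ⊢
      omega

lemma gg_le_headI {l : List ℕ} (h : l.Pairwise (· ≥ ·)) : gg l ≤ l.headI := by
  have := gg_tail_add h; omega

-- attachH lemmas
lemma attachH_headI (a b : ℕ) (ν : List ℕ) : (attachH a b ν).headI = a + 1 := rfl

lemma attachH_length (a b : ℕ) (ν : List ℕ) (hb : ν.length ≤ b) :
    (attachH a b ν).length = b + 1 := by
  simp [attachH]; omega

lemma attachH_sum (a b : ℕ) (ν : List ℕ) (hb : ν.length ≤ b) :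
    (attachH a b ν).sum = a + b + 1 + ν.sum := by
  simp [attachH]; omega

lemma attachH_isPartition (a b : ℕ) (ν : List ℕ) (hν : IsPartition ν)
    (ha : ν.headI ≤ a) : IsPartition (attachH a b ν) := by
  obtain ⟨hs, hp⟩ := hν
  constructor
  · rw [attachH, List.pairwise_cons]
    constructor
    · intro z hz
      rcases List.mem_append.1 hz with hz | hz
      · obtain ⟨w, hw, rfl⟩ := List.mem_map.1 hz
        have := mem_le_headI hs hw
        omega
      · have := List.eq_of_mem_replicate hz
        omega
    · rw [List.pairwise_append]
      refine ⟨?_, ?_, ?_⟩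
      · exact List.Pairwise.map _ (fun hxy => by omega) hs
      · exact List.pairwise_replicate.2 (Or.inr le_rfl)
      · intro u hu v hv
        obtain ⟨w, hw, rfl⟩ := List.mem_map.1 hu
        have := List.eq_of_mem_replicate hv
        omega
  · intro x hx
    rcases List.mem_cons.1 hx with rfl | hx
    · omega
    rcases List.mem_append.1 hx with hx | hx
    · obtain ⟨w, hw, rfl⟩ := List.mem_map.1 hx; omega
    · have := List.eq_of_mem_replicate hx; omega

-- takeWhile through append of good prefix
lemma takeWhile_all_append {p : ℕ → Bool} {l l' : List ℕ} (h : ∀ x ∈ l, p x) :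
    (l ++ l').takeWhile p = l ++ l'.takeWhile p := by
  induction l with
  | nil => rfl
  | cons a t ih =>
    have ha : p a := h a (mem_cons_self)
    simp [List.takeWhile_cons, ha, ih (fun x hx => h x (mem_cons_of_mem _ hx))]

lemma peelT_attachH_tail (b : ℕ) (ν : List ℕ) (hp : ∀ x ∈ ν, 0 < x) :
    peelT (ν.map (· + 1) ++ List.replicate (b - ν.length) 1) = ν := by
  rw [peelT, takeWhile_all_append]
  · have h1 : (List.replicate (b - ν.length) 1).takeWhile (fun z => decide (2 ≤ z)) = [] := by
      cases h : b - ν.length with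
      | zero => simp
      | succ k => simp [List.replicate_succ]
    rw [h1, List.append_nil, List.map_map]
    conv_rhs => rw [← List.map_id ν]
    exact List.map_congr_left fun x hx => by simp
  · intro x hx
    obtain ⟨w, hw, rfl⟩ := List.mem_map.1 hx
    have := hp w hw
    simp; omega

-- reconstruction: a sorted positive list t equals its peel reattached
lemma peelT_recon {t : List ℕ} (hs : t.Pairwise (· ≥ ·)) (hp : ∀ x ∈ t, 0 < x) :
    (peelT t).map (· + 1) ++ List.replicate (t.length - (peelT t).length) 1 = t := by
  induction t with
  | nil => rfl
  | cons x t' ih =>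
    by_cases hx : 2 ≤ x
    · have : peelT (x :: t') = (x - 1) :: peelT t' := by
        simp [peelT, List.takeWhile_cons, hx]
      rw [this]
      have hlen : (peelT t').length ≤ t'.length := by
        simpa [peelT] using (t'.takeWhile_sublist (fun z => decide (2 ≤ z))).length_le
      have ht' := ih hs.tail (fun z hz => hp z (mem_cons_of_mem _ hz))
      simp only [List.map_cons, List.cons_append, List.length_cons]
      rw [show x - 1 + 1 = x by omega]
      congr 1
      rw [show t'.length + 1 - ((peelT t').length + 1) = t'.length - (peelT t').length by omega]
      exact ht'
    · have hx1 : x = 1 := by have := hp x (mem_cons_self); omega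
      have : peelT (x :: t') = [] := by simp [peelT, List.takeWhile_cons, hx]
      rw [this]
      simp only [List.map_nil, List.nil_append, List.length_nil, Nat.sub_zero]
      have : ∀ z ∈ x :: t', z = 1 := by
        intro z hz
        have h1 := hp z hz
        have h2 := mem_le_headI hs hz
        simp only [List.headI] at h2
        omega
      conv_rhs => rw [List.eq_replicate_length.2 this]

lemma peelT_isPartition {t : List ℕ} (hs : t.Pairwise (· ≥ ·)) :
    IsPartition (peelT t) := by
  constructor
  · exact List.Pairwise.map _ (fun hxy => by omega)
      (hs.sublist (t.takeWhile_sublist _))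
  · intro x hx
    obtain ⟨w, hw, rfl⟩ := List.mem_map.1 hx
    have := List.mem_takeWhile_imp hw
    simp at this; omega

lemma peelT_headI {t : List ℕ} (h : peelT t ≠ []) :
    (peelT t).headI + 1 = t.headI ∧ 2 ≤ t.headI := by
  cases t with
  | nil => simp [peelT] at h
  | cons x t' =>
    by_cases hx : 2 ≤ x
    · constructor
      · simp [peelT, List.takeWhile_cons, hx]; omega
      · simpa using hx
    · exfalso; apply h; simp [peelT, List.takeWhile_cons, hx]

lemma peelT_sum {t : List ℕ} (hs : t.Pairwise (· ≥ ·)) (hp : ∀ x ∈ t, 0 < x) :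
    (peelT t).sum + t.length = t.sum := by
  have h := peelT_recon hs hp
  have hlen := peelT_length_le t
  calc (peelT t).sum + t.length
      = ((peelT t).map (· + 1) ++ List.replicate (t.length - (peelT t).length) 1).sum := by
        simp; omega
    _ = t.sum := by rw [h]

lemma DP_sorted_ge {l : List ℕ} (h : l.Pairwise (· > ·)) : l.Pairwise (· ≥ ·) :=
  h.imp le_of_lt

lemma Osum_nil : Osum [] = 0 := rfl
lemma Osum_single (x : ℕ) : Osum [x] = x := rfl
lemma Osum_cons_cons (x y : ℕ) (l : List ℕ) : Osum (x :: y :: l) = x + Osum l := rfl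

lemma IsPartition_nil : IsPartition ([] : List ℕ) := ⟨List.Pairwise.nil, by simp⟩

lemma main_A (l : List ℕ) : IsDistinctPartition l →
    IsPartition (Phi l) ∧ (Phi l).length = gg l ∧
    (l ≠ [] → (Phi l).headI = gg l.tail + 1) ∧ (Phi l).sum = Osum l := by
  induction l using Phi.induct with
  | case1 => intro _; exact ⟨IsPartition_nil, rfl, by simp, rfl⟩
  | case2 x =>
    intro hDP
    have hx : 1 ≤ x := hDP.2 x (mem_cons_self)
    refine ⟨attachH_isPartition _ _ _ IsPartition_nil (by simp), ?_, ?_, ?_⟩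
    · rw [Phi, attachH_length _ _ _ (by simp)]
      simp [gg]; omega
    · intro _; rw [Phi, attachH_headI]; rfl
    · rw [Phi, attachH_sum _ _ _ (by simp), Osum_single]
      simp; omega
  | case3 x y l ih =>
    intro hDP
    obtain ⟨hs, hp⟩ := hDP
    have hxy : x > y := List.rel_of_pairwise_cons hs (mem_cons_self)
    have hsl : (y :: l).Pairwise (· > ·) := hs.tail
    have hDPl : IsDistinctPartition l :=
      ⟨hsl.tail, fun z hz => hp z (mem_cons_of_mem _ (mem_cons_of_mem _ hz))⟩
    obtain ⟨ihP, ihLen, ihHead, ihSum⟩ := ih hDPl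
    have hb : (Phi l).length ≤ (x - y - 1) + gg l := by omega
    have ha : (Phi l).headI ≤ gg (y :: l) := by
      cases l with
      | nil => simp [Phi]
      | cons z l' =>
        have hyz : y > z := List.rel_of_pairwise_cons hsl (mem_cons_self)
        rw [ihHead (by simp)]
        simp only [gg, List.tail_cons]
        omega
    have hgy : gg l + gg (y :: l) = y := by
      simpa using gg_tail_add (DP_sorted_ge hsl)
    refine ⟨attachH_isPartition _ _ _ ihP ha, ?_, ?_, ?_⟩
    · rw [Phi, attachH_length _ _ _ hb]
      simp only [gg]; omega
    · intro _; rw [Phi, attachH_headI]; rfl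
    · rw [Phi, attachH_sum _ _ _ hb, Osum_cons_cons, ihSum]
      omega

lemma headI_mem' {l : List ℕ} (h : l ≠ []) : l.headI ∈ l := by
  cases l with
  | nil => exact absurd rfl h
  | cons a t => exact mem_cons_self

lemma main_B (μ : List ℕ) : IsPartition μ →
    IsDistinctPartition (Psi μ) ∧ gg (Psi μ) = μ.length ∧
    (μ ≠ [] → (Psi μ).headI + 1 = μ.headI + μ.length) ∧ Osum (Psi μ) = μ.sum := by
  induction μ using Psi.induct with
  | case1 =>
    intro _
    rw [show Psi [] = [] from by rw [Psi]]
    exact ⟨⟨List.Pairwise.nil, by simp⟩, rfl, by simp, rfl⟩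
  | case2 m t ih =>
    intro hP
    obtain ⟨hs, hp⟩ := hP
    have hm : 1 ≤ m := hp m (mem_cons_self)
    have hts : t.Pairwise (· ≥ ·) := hs.tail
    have htp : ∀ x ∈ t, 0 < x := fun z hz => hp z (mem_cons_of_mem _ hz)
    have hν : IsPartition (peelT t) := peelT_isPartition hts
    obtain ⟨ihDP, ihg, ihHead, ihO⟩ := ih hν
    have hlen : (peelT t).length ≤ t.length := peelT_length_le t
    have hsum : (peelT t).sum + t.length = t.sum := peelT_sum hts htp
    have hheadm : (peelT t) ≠ [] → (peelT t).headI + 1 ≤ m := by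
      intro hne
      obtain ⟨h1, h2⟩ := peelT_headI hne
      have htne : t ≠ [] := by
        intro h; rw [h] at hne; exact hne rfl
      have : t.headI ≤ m := List.rel_of_pairwise_cons hs (headI_mem' htne)
      omega
    by_cases hz : (m - 1) + (peelT t).length = 0
    · have hm1 : m = 1 := by omega
      have hν0 : (peelT t).length = 0 := by omega
      rw [Psi, cons0, if_pos hz]
      refine ⟨⟨List.pairwise_singleton _ _, by simp; omega⟩, ?_, ?_, ?_⟩
      · simp [gg]; omega
      · intro _; simp [List.headI]; omega
      · have hν0' : peelT t = [] := List.eq_nil_of_length_eq_zero hν0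
        rw [hν0'] at hsum
        rw [Osum_single]
        simp only [List.sum_cons, List.length_cons, List.sum_nil] at hsum ⊢
        omega
    · rw [Psi, cons0, if_neg hz]
      have hPsiheadlt : ∀ z ∈ Psi (peelT t), z < (m - 1) + (peelT t).length := by
        intro z hz'
        have hne : Psi (peelT t) ≠ [] := List.ne_nil_of_mem hz'
        have hνne : peelT t ≠ [] := by
          intro h; rw [h] at hne; exact hne (by rw [Psi])
        have h1 := ihHead hνne
        have h2 := hheadm hνne
        have h3 : z ≤ (Psi (peelT t)).headI := mem_le_headI (DP_sorted_ge ihDP.1) hz'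
        have h4 : 0 < (peelT t).headI := hν.2 _ (headI_mem' hνne)
        omega
      refine ⟨⟨?_, ?_⟩, ?_, ?_, ?_⟩
      · rw [List.pairwise_cons]
        refine ⟨?_, ?_⟩
        · intro z hz'
          rcases mem_cons.1 hz' with rfl | hz'
          · omega
          · have := hPsiheadlt z hz'; omega
        · rw [List.pairwise_cons]
          exact ⟨fun z hz' => hPsiheadlt z hz', ihDP.1⟩
      · intro z hz'
        rcases mem_cons.1 hz' with rfl | hz'
        · omega
        rcases mem_cons.1 hz' with rfl | hz'
        · omega
        · exact ihDP.2 z hz'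
      · show gg (_ :: _ :: _) = _
        rw [gg]  -- may need explicit
        rw [ihg]
        simp only [List.length_cons]
        omega
      · intro _
        simp only [List.headI, List.length_cons]
        omega
      · rw [Osum_cons_cons, ihO]
        simp only [List.sum_cons]
        omega

lemma main_C (l : List ℕ) : IsDistinctPartition l → Psi (Phi l) = l := by
  induction l using Phi.induct with
  | case1 => intro _; rw [Phi, Psi]
  | case2 x =>
    intro hDP
    have hx : 1 ≤ x := hDP.2 x (mem_cons_self)
    rw [Phi]
    show Psi ((0 + 1) :: ([] ++ List.replicate (x - 1 - 0) 1)) = [x]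
    rw [Psi]
    have hpeel : peelT (List.replicate (x - 1 - 0) 1) = [] :=
      peelT_attachH_tail (x-1) [] (by simp)
    simp only [List.nil_append] at hpeel ⊢
    rw [hpeel, cons0, if_pos (by simp)]
    have : 0 + 1 + (List.replicate (x - 1 - 0) 1).length = x := by
      simp [List.length_replicate]; omega
    rw [this]
  | case3 x y l ih =>
    intro hDP
    obtain ⟨hs, hp⟩ := hDP
    have hxy : x > y := List.rel_of_pairwise_cons hs (mem_cons_self)
    have hsl : (y :: l).Pairwise (· > ·) := hs.tail
    have hy : 1 ≤ y := hp y (mem_cons_of_mem _ (mem_cons_self))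
    have hDPl : IsDistinctPartition l :=
      ⟨hsl.tail, fun z hz => hp z (mem_cons_of_mem _ (mem_cons_of_mem _ hz))⟩
    obtain ⟨ihP, ihLen, ihHead, ihSum⟩ := main_A l hDPl
    have hgy : gg l + gg (y :: l) = y := by
      simpa using gg_tail_add (DP_sorted_ge hsl)
    rw [Phi, attachH, Psi]
    have hpeel : peelT ((Phi l).map (· + 1) ++
        List.replicate ((x - y - 1) + gg l - (Phi l).length) 1) = Phi l :=
      peelT_attachH_tail _ _ ihP.2
    rw [hpeel]
    have hlen : ((Phi l).map (· + 1) ++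
        List.replicate ((x - y - 1) + gg l - (Phi l).length) 1).length = (x - y - 1) + gg l := by
      simp [List.length_append, List.length_replicate]
      omega
    rw [hlen, ih hDPl]
    have h1 : gg (y :: l) + 1 + ((x - y - 1) + gg l) = x := by omega
    have h2 : gg (y :: l) + 1 - 1 + (Phi l).length = y := by rw [ihLen]; omega
    rw [h1, h2, cons0, if_neg (by omega)]

lemma main_D (μ : List ℕ) : IsPartition μ → Phi (Psi μ) = μ := by
  induction μ using Psi.induct with
  | case1 => intro _; rw [Psi, Phi]
  | case2 m t ih =>
    intro hP
    obtain ⟨hs, hp⟩ := hP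
    have hm : 1 ≤ m := hp m (mem_cons_self)
    have hts : t.Pairwise (· ≥ ·) := hs.tail
    have htp : ∀ x ∈ t, 0 < x := fun z hz => hp z (mem_cons_of_mem _ hz)
    have hν : IsPartition (peelT t) := peelT_isPartition hts
    have hlen : (peelT t).length ≤ t.length := peelT_length_le t
    have hrecon := peelT_recon hts htp
    obtain ⟨ihDP, ihg, ihHead, ihO⟩ := main_B (peelT t) hν
    by_cases hz : (m - 1) + (peelT t).length = 0
    · have hm1 : m = 1 := by omega
      have hν0 : peelT t = [] := List.eq_nil_of_length_eq_zero (by omega)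
      rw [Psi, cons0, if_pos hz, Phi, attachH]
      rw [hν0] at hrecon
      simp only [List.map_nil, List.nil_append, List.length_nil, Nat.sub_zero] at hrecon ⊢
      rw [show m + t.length - 1 = t.length by omega, hrecon,
        show (0 : ℕ) + 1 = m by omega]
    · rw [Psi, cons0, if_neg hz]
      have hBs := (main_B (m :: t) ⟨hs, hp⟩).1.1
      rw [Psi, cons0, if_neg hz] at hBs
      have hsl2 : ((m - 1 + (peelT t).length) :: Psi (peelT t)).Pairwise (· ≥ ·) :=
        DP_sorted_ge hBs.tail
      have hgt := gg_tail_add hsl2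
      simp only [List.tail_cons, List.headI] at hgt
      rw [ihg] at hgt
      rw [Phi, ih hν, ihg]
      have hggl2 : gg ((m - 1 + (peelT t).length) :: Psi (peelT t)) = m - 1 := by omega
      rw [hggl2,
        show m + t.length - (m - 1 + (peelT t).length) - 1 + (peelT t).length = t.length by omega,
        attachH, show m - 1 + 1 = m by omega]
      rw [hrecon]

lemma toFun_prop (N n : ℕ) (l : List ℕ)
    (h : IsDistinctPartition l ∧ (∀ x ∈ l, x ≤ N) ∧ Osum l = n) :
    IsPartition (Phi l) ∧ (Phi l).sum = n ∧ (Phi l).headI + (Phi l).length ≤ N + 1 := by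
  obtain ⟨hDP, hle, hO⟩ := h
  obtain ⟨hP, hlen, hhead, hsum⟩ := main_A l hDP
  refine ⟨hP, by rw [hsum, hO], ?_⟩
  rcases eq_or_ne l [] with rfl | hne
  · simp [Phi]
  · rw [hhead hne, hlen]
    have h1 := gg_tail_add (DP_sorted_ge hDP.1)
    have h2 := hle l.headI (headI_mem' hne)
    omega

lemma invFun_prop (N n : ℕ) (μ : List ℕ)
    (h : IsPartition μ ∧ μ.sum = n ∧ μ.headI + μ.length ≤ N + 1) :
    IsDistinctPartition (Psi μ) ∧ (∀ x ∈ Psi μ, x ≤ N) ∧ Osum (Psi μ) = n := by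
  obtain ⟨hP, hsum, hhook⟩ := h
  obtain ⟨hDP, hg, hhead, hO⟩ := main_B μ hP
  refine ⟨hDP, ?_, by rw [hO, hsum]⟩
  intro z hz
  have hne : μ ≠ [] := by
    intro hnil; subst hnil
    rw [show Psi [] = [] from by rw [Psi]] at hz
    simp at hz
  have h1 := hhead hne
  have h2 := mem_le_headI (DP_sorted_ge hDP.1) hz
  omega

end SchmidtAux

/-- The number of partitions into distinct parts `≤ N` with `O(π) = n` equals the number of
partitions `μ = (μ1, …, μr)` of `n` whose largest hook length `μ1 + r − 1` is at most `N`
(equivalently `μ1 + r ≤ N + 1`, which also covers the empty partition with hook length 0). -/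
theorem finite_schmidt_hook (N n : ℕ) :
    Nat.card {l : List ℕ // IsDistinctPartition l ∧ (∀ x ∈ l, x ≤ N) ∧ Osum l = n} =
      Nat.card {l : List ℕ // IsPartition l ∧ l.sum = n ∧ l.headI + l.length ≤ N + 1} := by
  exact Nat.card_congr
    { toFun := fun x => ⟨Phi x.1, toFun_prop N n x.1 x.2⟩
      invFun := fun y => ⟨Psi y.1, invFun_prop N n y.1 y.2⟩
      left_inv := fun x => Subtype.ext (main_C x.1 x.2.1)
      right_inv := fun y => Subtype.ext (main_D y.1 y.2.1) }
end
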